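/- Let A be a unital complex Banach algebra with ‖1‖ = 1 and a ∈ A with ‖exp(t·a)‖ ≤ 1 for all t ≥ 0. Then 1 − a is invertible with inverse ∫₀^∞ e^{−t}·exp(t·a) dt, and ‖(1 − a)⁻¹‖ ≤ 1. -/

import Mathlib

open MeasureTheory

theorem stmt16 {A : Type*} [NormedRing A] [NormedAlgebra ℂ A] [NormOneClass A]
    [CompleteSpace A] (a : A)
    (h : ∀ t : ℝ, 0 ≤ t → ‖NormedSpace.exp ((t : ℂ) • a)‖ ≤ 1) :
    IsUnit (1 - a) ∧
    (1 - a) * (∫ t in Set.Ioi (0 : ℝ), Real.exp (-t) • NormedSpace.exp ((t : ℂ) • a)) = 1 ∧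
    (∫ t in Set.Ioi (0 : ℝ), Real.exp (-t) • NormedSpace.exp ((t : ℂ) • a)) * (1 - a) = 1 ∧
    ‖∫ t in Set.Ioi (0 : ℝ), Real.exp (-t) • NormedSpace.exp ((t : ℂ) • a)‖ ≤ 1 := by
  have hsm : ∀ t : ℝ, ((t : ℂ) • a) = t • a := fun t => by
    rw [← smul_one_smul ℂ t a, Complex.real_smul, mul_one]
  set g : ℝ → A := fun t => Real.exp (-t) • NormedSpace.exp ((t : ℂ) • a) with hgdef
  -- norm bound
  have hbound : ∀ t : ℝ, 0 ≤ t → ‖g t‖ ≤ Real.exp (-t) := by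
    intro t ht
    calc ‖g t‖ = Real.exp (-t) * ‖NormedSpace.exp ((t : ℂ) • a)‖ := by
          rw [hgdef]; simp [norm_smul, abs_of_pos (Real.exp_pos (-t))]
      _ ≤ Real.exp (-t) * 1 := by
          exact mul_le_mul_of_nonneg_left (h t ht) (Real.exp_pos (-t)).le
      _ = Real.exp (-t) := mul_one _
  -- derivative
  have hderiv : ∀ t : ℝ, HasDerivAt g (g t * a - g t) t := by
    intro t
    have h1 : HasDerivAt (fun t : ℝ => Real.exp (-t)) (-Real.exp (-t)) t := by
      simpa using (hasDerivAt_neg t).exp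
    have h2 : HasDerivAt (fun t : ℝ => NormedSpace.exp ((t : ℂ) • a))
        (NormedSpace.exp ((t : ℂ) • a) * a) t := by
      have := hasDerivAt_exp_smul_const (𝕂 := ℝ) a t
      simp only [hsm]
      exact this
    have := h1.smul h2
    refine this.congr_deriv ?_
    rw [hgdef]
    simp only [smul_mul_assoc, neg_smul]
    abel
  have hcont : Continuous g := by
    rw [continuous_iff_continuousAt]; exact fun t => (hderiv t).continuousAt
  -- integrability of g
  have hexpint : IntegrableOn (fun t : ℝ => Real.exp (-t)) (Set.Ioi (0 : ℝ)) := by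
    simpa using exp_neg_integrableOn_Ioi 0 (one_pos)
  have hgint : IntegrableOn g (Set.Ioi (0 : ℝ)) := by
    refine Integrable.mono' hexpint (hcont.aestronglyMeasurable.restrict) ?_
    filter_upwards [self_mem_ae_restrict measurableSet_Ioi] with t ht
    exact hbound t (le_of_lt ht)
  -- integrability of g'
  have hg'int : IntegrableOn (fun t => g t * a - g t) (Set.Ioi (0 : ℝ)) :=
    (hgint.mul_const a).sub hgint
  -- limit at infinity
  have htend : Filter.Tendsto g Filter.atTop (nhds 0) := by
    apply squeeze_zero_norm' _ Real.tendsto_exp_neg_atTop_nhds_zero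
    filter_upwards [Filter.eventually_ge_atTop (0 : ℝ)] with t ht
    exact hbound t ht
  have hg0 : g 0 = 1 := by
    rw [hgdef]; simp [NormedSpace.exp_zero]
  -- FTC
  have hFTC : (∫ t in Set.Ioi (0 : ℝ), (g t * a - g t)) = -1 := by
    rw [integral_Ioi_of_hasDerivAt_of_tendsto hcont.continuousWithinAt
      (fun x _ => hderiv x) hg'int htend, hg0, zero_sub]
  -- pull out the constants
  have hsplit : (∫ t in Set.Ioi (0 : ℝ), (g t * a - g t))
      = (∫ t in Set.Ioi (0 : ℝ), g t) * a - (∫ t in Set.Ioi (0 : ℝ), g t) := by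
    rw [integral_sub (hgint.mul_const a) hgint]
    congr 1
    exact ((ContinuousLinearMap.mul ℝ A).flip a).integral_comp_comm hgint
  set u : A := ∫ t in Set.Ioi (0 : ℝ), g t with hu
  have hmul : u * a - u = -1 := by rw [← hsplit, hFTC]
  -- a commutes with g t, hence with u
  have hcomm : a * u = u * a := by
    have : ∀ t : ℝ, a * g t = g t * a := by
      intro t
      rw [hgdef]
      simp only [mul_smul_comm, smul_mul_assoc]
      congr 1
      exact (((Commute.refl a).smul_right ((t : ℂ))).exp_right).eq
    calc a * u = (ContinuousLinearMap.mul ℝ A a) u := rfl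
      _ = ∫ t in Set.Ioi (0 : ℝ), (ContinuousLinearMap.mul ℝ A a) (g t) :=
          ((ContinuousLinearMap.mul ℝ A a).integral_comp_comm hgint).symm
      _ = ∫ t in Set.Ioi (0 : ℝ), (ContinuousLinearMap.mul ℝ A).flip a (g t) := by
          simp only [ContinuousLinearMap.mul_apply', ContinuousLinearMap.flip_apply, this]
      _ = u * a := ((ContinuousLinearMap.mul ℝ A).flip a).integral_comp_comm hgint
  have h1 : (1 - a) * u = 1 := by
    rw [sub_mul, one_mul, hcomm, ← neg_sub (u * a) u, hmul, neg_neg]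
  have h2 : u * (1 - a) = 1 := by
    rw [mul_sub, mul_one, ← neg_sub (u * a) u, hmul, neg_neg]
  refine ⟨⟨⟨1 - a, u, h1, h2⟩, rfl⟩, h1, h2, ?_⟩
  calc ‖u‖ ≤ ∫ t in Set.Ioi (0 : ℝ), Real.exp (-t) := by
        refine norm_integral_le_of_norm_le hexpint ?_
        filter_upwards [self_mem_ae_restrict measurableSet_Ioi] with t ht
        exact hbound t (le_of_lt ht)
    _ = 1 := integral_exp_neg_Ioi_zero
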